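/- Let H be a real Hilbert space, E a nonempty closed convex subset of H, and f : E × E → ℝ a bifunction satisfying conditions (A1)–(A4). Let r > 0 and x, x' ∈ H, and suppose z, z' ∈ E satisfy f(z, y) + (1/r)⟨y − z, z − x⟩ ≥ 0 for all y ∈ E and f(z', y) + (1/r)⟨y − z', z' − x'⟩ ≥ 0 for all y ∈ E. Then ‖z − z'‖² ≤ ⟨z − z', x − x'⟩. (That is, the resolvent T_r is firmly nonexpansive.) -/

import Mathlib

open Filter RealInnerProductSpace
open scoped Topology

/-- Lemma 2.4 (ii): the resolvent T_r is firmly nonexpansive. -/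
theorem stmt_8
    {H : Type*} [NormedAddCommGroup H] [InnerProductSpace ℝ H] [CompleteSpace H]
    (E : Set H) (hEne : E.Nonempty) (hEcl : IsClosed E) (hEco : Convex ℝ E)
    (f : H → H → ℝ)
    (hA1 : ∀ x ∈ E, f x x = 0)
    (hA2 : ∀ x ∈ E, ∀ y ∈ E, f x y + f y x ≤ 0)
    (hA3 : ∀ x ∈ E, ∀ y ∈ E, ∀ z ∈ E,
      Filter.limsup (fun t : ℝ => f (t • z + (1 - t) • x) y) (nhdsWithin 0 (Set.Ioi 0)) ≤ f x y)
    (hA4c : ∀ x ∈ E, ConvexOn ℝ E (f x))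
    (hA4l : ∀ x ∈ E, LowerSemicontinuousOn (f x) E)
    (r : ℝ) (hr : 0 < r) (x x' : H)
    (z z' : H) (hz : z ∈ E) (hz' : z' ∈ E)
    (h : ∀ y ∈ E, 0 ≤ f z y + (1 / r) * ⟪y - z, z - x⟫)
    (h' : ∀ y ∈ E, 0 ≤ f z' y + (1 / r) * ⟪y - z', z' - x'⟫) :
    ‖z - z'‖ ^ 2 ≤ ⟪z - z', x - x'⟫ := by
  have h1 := h z' hz'
  have h2 := h' z hz
  have hmono := hA2 z hz z' hz'
  have key : 0 ≤ (1 / r) * (⟪z' - z, z - x⟫ + ⟪z - z', z' - x'⟫) := by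
    nlinarith [h1, h2, hmono]
  have key2 : 0 ≤ ⟪z' - z, z - x⟫ + ⟪z - z', z' - x'⟫ := by
    have := mul_le_mul_of_nonneg_left key (le_of_lt hr)
    field_simp at this
    linarith [this]
  have expand : ⟪z' - z, z - x⟫ + ⟪z - z', z' - x'⟫ = ⟪z - z', x - x'⟫ - ‖z - z'‖ ^ 2 := by
    rw [← real_inner_self_eq_norm_sq]
    simp only [inner_sub_left, inner_sub_right]
    linarith [real_inner_comm z z', real_inner_comm z x, real_inner_comm z' x,
      real_inner_comm z x', real_inner_comm z' x']
  linarith [key2, expand]
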